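/- Let P, Q be probability measures with densities p, q relative to ν, and let X be an integrable random variable. Then for any real numbers u, v: (1/5)·(1 - H²(P,Q))²·|u - v| ≤ max(E_P[|X - u|], E_Q[|X - v|]). -/

import Mathlib

open MeasureTheory ProbabilityTheory
open scoped NNReal ENNReal

private lemma cs_aux {Ω : Type*} [MeasurableSpace Ω] {μ : Measure Ω} {f g : Ω → ℝ}
    (hf : AEStronglyMeasurable f μ) (hg : AEStronglyMeasurable g μ)
    (h0f : ∀ ω, 0 ≤ f ω) (h0g : ∀ ω, 0 ≤ g ω)
    (hf2 : Integrable (fun ω => f ω ^ 2) μ) (hg2 : Integrable (fun ω => g ω ^ 2) μ) :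
    ∫ ω, f ω * g ω ∂μ ≤ Real.sqrt (∫ ω, f ω ^ 2 ∂μ) * Real.sqrt (∫ ω, g ω ^ 2 ∂μ) := by
  have hpq : Real.HolderConjugate 2 2 := Real.HolderConjugate.two_two
  have h2 : (ENNReal.ofReal 2) = 2 := by norm_num
  have hf' : MemLp f 2 μ := (memLp_two_iff_integrable_sq hf).mpr hf2
  have hg' : MemLp g 2 μ := (memLp_two_iff_integrable_sq hg).mpr hg2
  have key := integral_mul_le_Lp_mul_Lq_of_nonneg hpq (Filter.Eventually.of_forall h0f)
    (Filter.Eventually.of_forall h0g) (h2 ▸ hf') (h2 ▸ hg')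
  have hr : ∀ x : ℝ, x ^ (2:ℝ) = x ^ 2 := fun x => by
    rw [show (2:ℝ) = ((2:ℕ):ℝ) by norm_num, Real.rpow_natCast]
  simp_rw [hr] at key
  rw [Real.sqrt_eq_rpow, Real.sqrt_eq_rpow]
  exact key

set_option maxHeartbeats 2000000 in
theorem stmt14 {Ω : Type*} [MeasurableSpace Ω] (ν P Q : Measure Ω)
    (p q : Ω → ℝ) (hpm : Measurable p) (hqm : Measurable q)
    (hp0 : ∀ ω, 0 ≤ p ω) (hq0 : ∀ ω, 0 ≤ q ω)
    (hpint : Integrable p ν) (hqint : Integrable q ν)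
    (hP : P = ν.withDensity fun ω => ENNReal.ofReal (p ω))
    (hQ : Q = ν.withDensity fun ω => ENNReal.ofReal (q ω))
    [IsProbabilityMeasure P] [IsProbabilityMeasure Q]
    (X : Ω → ℝ) (hXP : Integrable X P) (hXQ : Integrable X Q) (u v : ℝ) :
    (1 / 5) * (1 - (1 / 2) * ∫ ω, (Real.sqrt (p ω) - Real.sqrt (q ω)) ^ 2 ∂ν) ^ 2 * |u - v| ≤
      max (∫ ω, |X ω - u| ∂P) (∫ ω, |X ω - v| ∂Q) := by
  have hpn : Measurable fun ω => (p ω).toNNReal := hpm.real_toNNReal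
  have hqn : Measurable fun ω => (q ω).toNNReal := hqm.real_toNNReal
  have hcop : (fun ω => ENNReal.ofReal (p ω)) = fun ω => (((p ω).toNNReal : ℝ≥0) : ℝ≥0∞) := by
    funext ω; simp [ENNReal.ofReal]
  have hcoq : (fun ω => ENNReal.ofReal (q ω)) = fun ω => (((q ω).toNNReal : ℝ≥0) : ℝ≥0∞) := by
    funext ω; simp [ENNReal.ofReal]
  have hPd : P = ν.withDensity fun ω => (((p ω).toNNReal : ℝ≥0) : ℝ≥0∞) := by
    rw [hP, hcop]
  have hQd : Q = ν.withDensity fun ω => (((q ω).toNNReal : ℝ≥0) : ℝ≥0∞) := by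
    rw [hQ, hcoq]
  -- integral conversion
  have hEP : ∀ g : Ω → ℝ, ∫ ω, g ω ∂P = ∫ ω, p ω * g ω ∂ν := by
    intro g
    rw [hPd, integral_withDensity_eq_integral_smul hpn]
    exact integral_congr_ae (Filter.Eventually.of_forall fun ω => by
      simp [NNReal.smul_def, Real.coe_toNNReal _ (hp0 ω)])
  have hEQ : ∀ g : Ω → ℝ, ∫ ω, g ω ∂Q = ∫ ω, q ω * g ω ∂ν := by
    intro g
    rw [hQd, integral_withDensity_eq_integral_smul hqn]
    exact integral_congr_ae (Filter.Eventually.of_forall fun ω => by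
      simp [NNReal.smul_def, Real.coe_toNNReal _ (hq0 ω)])
  -- integrability conversion
  have hIP : ∀ g : Ω → ℝ, Integrable g P → Integrable (fun ω => p ω * g ω) ν := by
    intro g hg
    rw [hPd, integrable_withDensity_iff_integrable_smul hpn] at hg
    exact hg.congr (Filter.Eventually.of_forall fun ω => by
      simp [NNReal.smul_def, Real.coe_toNNReal _ (hp0 ω)])
  have hIQ : ∀ g : Ω → ℝ, Integrable g Q → Integrable (fun ω => q ω * g ω) ν := by
    intro g hg
    rw [hQd, integrable_withDensity_iff_integrable_smul hqn] at hg
    exact hg.congr (Filter.Eventually.of_forall fun ω => by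
      simp [NNReal.smul_def, Real.coe_toNNReal _ (hq0 ω)])
  have iPu : Integrable (fun ω => p ω * |X ω - u|) ν :=
    hIP _ ((hXP.sub (integrable_const u)).abs)
  have iPv : Integrable (fun ω => p ω * |X ω - v|) ν :=
    hIP _ ((hXP.sub (integrable_const v)).abs)
  have iQu : Integrable (fun ω => q ω * |X ω - u|) ν :=
    hIQ _ ((hXQ.sub (integrable_const u)).abs)
  have iQv : Integrable (fun ω => q ω * |X ω - v|) ν :=
    hIQ _ ((hXQ.sub (integrable_const v)).abs)
  -- total masses
  have h1p : ∫ ω, p ω ∂ν = 1 := by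
    have := hEP (fun _ => (1:ℝ))
    simpa using this.symm
  have h1q : ∫ ω, q ω ∂ν = 1 := by
    have := hEQ (fun _ => (1:ℝ))
    simpa using this.symm
  -- affinity
  set A := ∫ ω, Real.sqrt (p ω) * Real.sqrt (q ω) ∂ν with hAdef
  have hsm : Measurable fun ω => Real.sqrt (p ω) * Real.sqrt (q ω) :=
    (hpm.sqrt).mul (hqm.sqrt)
  have hptw : ∀ ω, Real.sqrt (p ω) * Real.sqrt (q ω) ≤ (p ω + q ω) / 2 := by
    intro ω
    nlinarith [sq_nonneg (Real.sqrt (p ω) - Real.sqrt (q ω)), Real.sq_sqrt (hp0 ω),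
      Real.sq_sqrt (hq0 ω)]
  have pq2int : Integrable (fun ω => (p ω + q ω) / 2) ν := (hpint.add hqint).div_const 2
  have hAint : Integrable (fun ω => Real.sqrt (p ω) * Real.sqrt (q ω)) ν := by
    refine Integrable.mono pq2int hsm.aestronglyMeasurable
      (Filter.Eventually.of_forall fun ω => ?_)
    have h0 : 0 ≤ Real.sqrt (p ω) * Real.sqrt (q ω) :=
      mul_nonneg (Real.sqrt_nonneg _) (Real.sqrt_nonneg _)
    have h1 : (0:ℝ) ≤ (p ω + q ω) / 2 := by
      have := hp0 ω; have := hq0 ω; linarith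
    rw [Real.norm_of_nonneg h0, Real.norm_of_nonneg h1]
    exact hptw ω
  have hA0 : 0 ≤ A := integral_nonneg fun ω =>
    mul_nonneg (Real.sqrt_nonneg _) (Real.sqrt_nonneg _)
  have h2half : ∫ ω, (p ω + q ω) / 2 ∂ν = 1 := by
    rw [integral_div, integral_add hpint hqint, h1p, h1q]; norm_num
  have hA1 : A ≤ 1 := by
    have hmono := integral_mono hAint pq2int hptw
    rw [hAdef]
    linarith [hmono, h2half.le]
  have hintsum : Integrable (fun ω => p ω + q ω) ν := hpint.add hqint
  have hint2A : Integrable (fun ω => 2 * (Real.sqrt (p ω) * Real.sqrt (q ω))) ν :=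
    hAint.const_mul 2
  have hAff : 1 - (1/2) * ∫ ω, (Real.sqrt (p ω) - Real.sqrt (q ω)) ^ 2 ∂ν = A := by
    have hcong : ∫ ω, (Real.sqrt (p ω) - Real.sqrt (q ω)) ^ 2 ∂ν
        = ∫ ω, (p ω + q ω - 2 * (Real.sqrt (p ω) * Real.sqrt (q ω))) ∂ν := by
      refine integral_congr_ae (Filter.Eventually.of_forall fun ω => ?_)
      have hp := Real.sq_sqrt (hp0 ω); have hq := Real.sq_sqrt (hq0 ω)
      linear_combination hp + hq
    rw [hcong, integral_sub hintsum hint2A,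
      integral_add hpint hqint, h1p, h1q, integral_const_mul]
    ring
  rw [hAff, hEP (fun ω => |X ω - u|), hEQ (fun ω => |X ω - v|)]
  set d := |u - v| with hddef
  have hd0 : 0 ≤ d := abs_nonneg _
  -- the five means
  set MP := ∫ ω, p ω * |X ω - u| ∂ν with hMP
  set MQv := ∫ ω, q ω * |X ω - v| ∂ν with hMQv
  set MPv := ∫ ω, p ω * |X ω - v| ∂ν with hMPv
  set MQu := ∫ ω, q ω * |X ω - u| ∂ν with hMQu
  set M := max MP MQv with hM
  have hMP0 : 0 ≤ MP := integral_nonneg fun ω => mul_nonneg (hp0 ω) (abs_nonneg _)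
  have hMQv0 : 0 ≤ MQv := integral_nonneg fun ω => mul_nonneg (hq0 ω) (abs_nonneg _)
  have hM0 : 0 ≤ M := le_trans hMP0 (le_max_left _ _)
  -- triangle bounds
  have hMQu_le : MQu ≤ MQv + d := by
    have step : MQu ≤ ∫ ω, (q ω * |X ω - v| + q ω * d) ∂ν := by
      refine integral_mono iQu (iQv.add (hqint.mul_const d)) fun ω => ?_
      have : |X ω - u| ≤ |X ω - v| + d := by
        rw [hddef, abs_sub_comm u v]
        exact abs_sub_le (X ω) v u
      nlinarith [hq0 ω, this]
    rw [integral_add iQv (hqint.mul_const d), integral_mul_const, h1q] at step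
    simpa using step
  have hMPv_le : MPv ≤ MP + d := by
    have step : MPv ≤ ∫ ω, (p ω * |X ω - u| + p ω * d) ∂ν := by
      refine integral_mono iPv (iPu.add (hpint.mul_const d)) fun ω => ?_
      have : |X ω - v| ≤ |X ω - u| + d := abs_sub_le (X ω) u v
      nlinarith [hp0 ω, this]
    rw [integral_add iPu (hpint.mul_const d), integral_mul_const, h1p] at step
    simpa using step
  -- Cauchy–Schwarz setup
  have aesm_sqrt : ∀ {g : Ω → ℝ}, Integrable g ν →
      AEStronglyMeasurable (fun ω => Real.sqrt (g ω)) ν := fun hg =>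
    Real.continuous_sqrt.comp_aestronglyMeasurable hg.aestronglyMeasurable
  have sqprod : ∀ (w : ℝ) ω, Real.sqrt (p ω * |X ω - w|) * Real.sqrt (q ω * |X ω - w|)
      = Real.sqrt (p ω) * Real.sqrt (q ω) * |X ω - w| := by
    intro w ω
    rw [Real.sqrt_mul (hp0 ω), Real.sqrt_mul (hq0 ω)]
    have h : Real.sqrt |X ω - w| * Real.sqrt |X ω - w| = |X ω - w| :=
      Real.mul_self_sqrt (abs_nonneg _)
    linear_combination Real.sqrt (p ω) * Real.sqrt (q ω) * h
  have hCS : ∀ (w : ℝ), Integrable (fun ω => p ω * |X ω - w|) ν →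
      Integrable (fun ω => q ω * |X ω - w|) ν →
      ∫ ω, Real.sqrt (p ω) * Real.sqrt (q ω) * |X ω - w| ∂ν ≤
        Real.sqrt (∫ ω, p ω * |X ω - w| ∂ν) * Real.sqrt (∫ ω, q ω * |X ω - w| ∂ν) := by
    intro w hpw hqw
    have h1 : Integrable (fun ω => (Real.sqrt (p ω * |X ω - w|)) ^ 2) ν :=
      hpw.congr (Filter.Eventually.of_forall fun ω =>
        (Real.sq_sqrt (mul_nonneg (hp0 ω) (abs_nonneg _))).symm)
    have h2 : Integrable (fun ω => (Real.sqrt (q ω * |X ω - w|)) ^ 2) ν :=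
      hqw.congr (Filter.Eventually.of_forall fun ω =>
        (Real.sq_sqrt (mul_nonneg (hq0 ω) (abs_nonneg _))).symm)
    have key := cs_aux (aesm_sqrt hpw) (aesm_sqrt hqw)
      (fun ω => Real.sqrt_nonneg _) (fun ω => Real.sqrt_nonneg _) h1 h2
    have e1 : ∫ ω, Real.sqrt (p ω * |X ω - w|) * Real.sqrt (q ω * |X ω - w|) ∂ν
        = ∫ ω, Real.sqrt (p ω) * Real.sqrt (q ω) * |X ω - w| ∂ν :=
      integral_congr_ae (Filter.Eventually.of_forall fun ω => sqprod w ω)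
    have e2 : ∫ ω, (Real.sqrt (p ω * |X ω - w|)) ^ 2 ∂ν = ∫ ω, p ω * |X ω - w| ∂ν :=
      integral_congr_ae (Filter.Eventually.of_forall fun ω =>
        Real.sq_sqrt (mul_nonneg (hp0 ω) (abs_nonneg _)))
    have e3 : ∫ ω, (Real.sqrt (q ω * |X ω - w|)) ^ 2 ∂ν = ∫ ω, q ω * |X ω - w| ∂ν :=
      integral_congr_ae (Filter.Eventually.of_forall fun ω =>
        Real.sq_sqrt (mul_nonneg (hq0 ω) (abs_nonneg _)))
    rw [e1, e2, e3] at key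
    exact key
  -- integrability of sqrt(pq)*|X-w|
  have hint_sqw : ∀ (w : ℝ), Integrable (fun ω => p ω * |X ω - w|) ν →
      Integrable (fun ω => q ω * |X ω - w|) ν →
      Integrable (fun ω => Real.sqrt (p ω) * Real.sqrt (q ω) * |X ω - w|) ν := by
    intro w hpw hqw
    refine Integrable.mono (hpw.add hqw)
      (((aesm_sqrt hpw).mul (aesm_sqrt hqw)).congr
        (Filter.Eventually.of_forall fun ω => sqprod w ω))
      (Filter.Eventually.of_forall fun ω => ?_)
    have h0 : 0 ≤ Real.sqrt (p ω) * Real.sqrt (q ω) * |X ω - w| :=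
      mul_nonneg (mul_nonneg (Real.sqrt_nonneg _) (Real.sqrt_nonneg _)) (abs_nonneg _)
    have hb : 0 ≤ p ω * |X ω - w| + q ω * |X ω - w| :=
      add_nonneg (mul_nonneg (hp0 ω) (abs_nonneg _)) (mul_nonneg (hq0 ω) (abs_nonneg _))
    show ‖Real.sqrt (p ω) * Real.sqrt (q ω) * |X ω - w|‖ ≤
      ‖p ω * |X ω - w| + q ω * |X ω - w|‖
    rw [Real.norm_of_nonneg h0, Real.norm_of_nonneg hb]
    nlinarith [hptw ω, abs_nonneg (X ω - w)]
  have iSu := hint_sqw u iPu iQu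
  have iSv := hint_sqw v iPv iQv
  -- main chain : d * A ≤ sum of two integrals
  have hchain : d * A ≤
      (∫ ω, Real.sqrt (p ω) * Real.sqrt (q ω) * |X ω - u| ∂ν) +
      (∫ ω, Real.sqrt (p ω) * Real.sqrt (q ω) * |X ω - v| ∂ν) := by
    have : d * A = ∫ ω, Real.sqrt (p ω) * Real.sqrt (q ω) * d ∂ν := by
      rw [integral_mul_const, hAdef]; ring
    rw [this, ← integral_add iSu iSv]
    refine integral_mono (hAint.mul_const d) (iSu.add iSv) fun ω => ?_
    have hdle : d ≤ |X ω - u| + |X ω - v| := by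
      rw [hddef]
      calc |u - v| = |(X ω - v) - (X ω - u)| := by ring_nf
        _ ≤ |X ω - v| + |X ω - u| := abs_sub _ _
        _ = |X ω - u| + |X ω - v| := by ring
    have h0 : 0 ≤ Real.sqrt (p ω) * Real.sqrt (q ω) :=
      mul_nonneg (Real.sqrt_nonneg _) (Real.sqrt_nonneg _)
    nlinarith [h0, hdle]
  -- bound each term by √M √(M+d)
  have hb1 : ∫ ω, Real.sqrt (p ω) * Real.sqrt (q ω) * |X ω - u| ∂ν ≤
      Real.sqrt M * Real.sqrt (M + d) := by
    refine le_trans (hCS u iPu iQu) ?_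
    have h1 : Real.sqrt MP ≤ Real.sqrt M := Real.sqrt_le_sqrt (le_max_left _ _)
    have h2 : Real.sqrt MQu ≤ Real.sqrt (M + d) := by
      apply Real.sqrt_le_sqrt
      calc MQu ≤ MQv + d := hMQu_le
        _ ≤ M + d := by have := le_max_right MP MQv; linarith
    exact mul_le_mul h1 h2 (Real.sqrt_nonneg _) (Real.sqrt_nonneg _)
  have hb2 : ∫ ω, Real.sqrt (p ω) * Real.sqrt (q ω) * |X ω - v| ∂ν ≤
      Real.sqrt M * Real.sqrt (M + d) := by
    refine le_trans (hCS v iPv iQv) ?_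
    have h1 : Real.sqrt MPv ≤ Real.sqrt (M + d) := by
      apply Real.sqrt_le_sqrt
      calc MPv ≤ MP + d := hMPv_le
        _ ≤ M + d := by have := le_max_left MP MQv; linarith
    have h2 : Real.sqrt MQv ≤ Real.sqrt M := Real.sqrt_le_sqrt (le_max_right _ _)
    calc Real.sqrt MPv * Real.sqrt MQv ≤ Real.sqrt (M + d) * Real.sqrt M :=
          mul_le_mul h1 h2 (Real.sqrt_nonneg _) (Real.sqrt_nonneg _)
      _ = Real.sqrt M * Real.sqrt (M + d) := mul_comm _ _
  have hkey : d * A ≤ 2 * (Real.sqrt M * Real.sqrt (M + d)) := by linarith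
  -- square it
  have hsq : (d * A) ^ 2 ≤ 4 * (M * (M + d)) := by
    have hrhs0 : 0 ≤ 2 * (Real.sqrt M * Real.sqrt (M + d)) := by positivity
    have hlhs0 : 0 ≤ d * A := mul_nonneg hd0 hA0
    have := mul_self_le_mul_self hlhs0 hkey
    have hsM : Real.sqrt M * Real.sqrt M = M := Real.mul_self_sqrt hM0
    have hsMd : Real.sqrt (M + d) * Real.sqrt (M + d) = M + d :=
      Real.mul_self_sqrt (by linarith)
    nlinarith [this, hsM, hsMd]
  -- final arithmetic
  clear_value M MQu MPv MQv MP d A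
  by_contra hcon
  push_neg at hcon
  have h5 : 5 * M < A ^ 2 * d := by nlinarith
  have hA2 : A ^ 2 ≤ 1 := by nlinarith
  have hgd : 5 * M * d ≤ A ^ 2 * d * d := mul_le_mul_of_nonneg_right h5.le hd0
  have h20 : A ^ 2 * (d * d) ≤ 20 * (M * M) := by nlinarith [hsq]
  have h25 : 25 * (M * M) < A ^ 2 * d * (A ^ 2 * d) := by
    nlinarith [mul_self_lt_mul_self (by linarith : (0:ℝ) ≤ 5 * M) h5]
  have hd2 : A ^ 2 * d * (A ^ 2 * d) ≤ A ^ 2 * (d * d) := by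
    nlinarith [mul_nonneg (sub_nonneg.mpr hA2)
      (mul_nonneg (sq_nonneg A) (mul_nonneg hd0 hd0))]
  nlinarith [h20, h25, hd2, mul_self_nonneg M]
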